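/- Fix 1 ≤ p < ∞. For every sequence (t_n,ω_n) in Θ and every (t,ω) ∈ Θ, one has d_p((t_n,ω_n),(t,ω)) → 0 if and only if ←d_p((t_n,ω_n),(t,ω)) → 0; in other words, the pseudo-metrics d_p and ←d_p induce the same topology on Θ (the identity map (Θ, ←d_p) → (Θ, d_p) is a homeomorphism). -/

import Mathlib

noncomputable section

open MeasureTheory Filter

/-- `ℝ^m` with the Euclidean norm. -/
abbrev Em (m : ℕ) : Type := EuclideanSpace ℝ (Fin m)

/-- The path space `Ω`: continuous functions on `[0,T]` with values in `ℝ^m` vanishing at `0`,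
equipped with the uniform norm (inherited from `C([0,T], ℝ^m)`). -/
abbrev PathSp (m : ℕ) (T : ℝ) : Type :=
  {ω : C(Set.Icc (0:ℝ) T, Em m) // ∀ s : Set.Icc (0:ℝ) T, (s : ℝ) = 0 → ω s = 0}

/-- `Θ = [0,T] × Ω`. -/
abbrev ThetaSp (m : ℕ) (T : ℝ) : Type := Set.Icc (0:ℝ) T × PathSp m T

/-- Evaluation of a path at an arbitrary real time, extended by `0` outside `[0,T]`
(in particular `ω(s) = 0` for `s < 0`). -/
def ev {m : ℕ} {T : ℝ} (ω : PathSp m T) (r : ℝ) : Em m :=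
  if h : r ∈ Set.Icc (0:ℝ) T then ω.val ⟨r, h⟩ else 0

/-- The backward pseudometric `←d_p` on `Θ`:
`←d_p((t,ω),(t',ω')) = |t−t'| + |ω(t)−ω'(t')| + (∫_0^T |ω(t−s)−ω'(t'−s)|^p ds)^{1/p}`,
with paths extended by `0` to negative times. -/
def dLp {m : ℕ} {T : ℝ} (p : ℝ) (θ θ' : ThetaSp m T) : ℝ :=
  |(θ.1 : ℝ) - (θ'.1 : ℝ)| + ‖ev θ.2 (θ.1 : ℝ) - ev θ'.2 (θ'.1 : ℝ)‖ +
    (∫ s in (0:ℝ)..T, ‖ev θ.2 ((θ.1 : ℝ) - s) - ev θ'.2 ((θ'.1 : ℝ) - s)‖ ^ p) ^ (1 / p)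

/-- The pseudometric `d_p` on `Θ`:
`d_p((t,ω),(t',ω')) = |t−t'| + (∫_0^{T+1} |ω(t∧s)−ω'(t'∧s)|^p ds)^{1/p}`. -/
def dPmetric {m : ℕ} {T : ℝ} (p : ℝ) (θ θ' : ThetaSp m T) : ℝ :=
  |(θ.1 : ℝ) - (θ'.1 : ℝ)| +
    (∫ s in (0:ℝ)..(T + 1),
      ‖ev θ.2 (min (θ.1 : ℝ) s) - ev θ'.2 (min (θ'.1 : ℝ) s)‖ ^ p) ^ (1 / p)

namespace Stmt3Aux

variable {m : ℕ} {T : ℝ}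

def clip (T r : ℝ) : ℝ := min (max r 0) T

lemma clip_mem (hT : 0 ≤ T) (r : ℝ) : clip T r ∈ Set.Icc (0:ℝ) T :=
  ⟨le_min (le_max_right r 0) hT, min_le_right _ _⟩

lemma continuous_clip : Continuous (clip T) := by
  unfold clip; fun_prop

lemma abs_clip_sub_clip (r r' : ℝ) : |clip T r - clip T r'| ≤ |r - r'| := by
  unfold clip
  calc |min (max r 0) T - min (max r' 0) T|
      ≤ |max r 0 - max r' 0| := by simpa using abs_min_sub_min_le_max (max r 0) T (max r' 0) T
    _ ≤ |r - r'| := abs_max_sub_max_le_abs r r' 0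

def evc (hT : 0 ≤ T) (ω : PathSp m T) (r : ℝ) : Em m := ω.val ⟨clip T r, clip_mem hT r⟩

lemma evc_continuous (hT : 0 ≤ T) (ω : PathSp m T) : Continuous (evc hT ω) :=
  ω.val.continuous.comp (continuous_clip.subtype_mk _)

lemma evc_nonpos (hT : 0 ≤ T) (ω : PathSp m T) {r : ℝ} (hr : r ≤ 0) : evc hT ω r = 0 := by
  apply ω.prop
  simp [clip, max_eq_right hr, min_eq_left hT]

lemma ev_eq_evc (hT : 0 ≤ T) (ω : PathSp m T) {u : ℝ} (hu : u ≤ T) : ev ω u = evc hT ω u := by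
  unfold ev evc
  by_cases h : u ∈ Set.Icc (0:ℝ) T
  · rw [dif_pos h]
    congr 1
    apply Subtype.ext
    simp [clip, max_eq_left h.1, min_eq_left h.2]
  · rw [dif_neg h]
    have hu0 : u ≤ 0 := by
      by_contra hc
      exact h ⟨le_of_lt (not_le.mp hc), hu⟩
    exact (evc_nonpos hT ω hu0).symm

lemma evc_ucont (hT : 0 ≤ T) (ω : PathSp m T) :
    ∀ ε > 0, ∃ δ > 0, ∀ u v : ℝ, |u - v| ≤ δ → ‖evc hT ω u - evc hT ω v‖ ≤ ε := by
  intro ε hε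
  have huc : UniformContinuous ω.val := CompactSpace.uniformContinuous_of_continuous ω.val.continuous
  rcases Metric.uniformContinuous_iff.mp huc ε hε with ⟨δ, hδ, H⟩
  refine ⟨δ/2, by positivity, fun u v huv => ?_⟩
  have hd : dist (⟨clip T u, clip_mem hT u⟩ : Set.Icc (0:ℝ) T) ⟨clip T v, clip_mem hT v⟩ < δ := by
    rw [Subtype.dist_eq]
    calc dist (clip T u) (clip T v) = |clip T u - clip T v| := Real.dist_eq _ _
      _ ≤ |u - v| := abs_clip_sub_clip _ _
      _ ≤ δ/2 := huv
      _ < δ := by linarith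
  have := H hd
  rw [dist_eq_norm] at this
  exact this.le



lemma tendsto_zero_iff_of_add {a b : ℕ → ℝ} (ha : ∀ n, 0 ≤ a n) (hb : ∀ n, 0 ≤ b n) :
    Tendsto (fun n => a n + b n) atTop (nhds 0) ↔
      (Tendsto a atTop (nhds 0) ∧ Tendsto b atTop (nhds 0)) := by
  constructor
  · intro h
    exact ⟨squeeze_zero ha (fun n => le_add_of_nonneg_right (hb n)) h,
           squeeze_zero hb (fun n => le_add_of_nonneg_left (ha n)) h⟩
  · rintro ⟨h1, h2⟩
    simpa using h1.add h2

lemma aux_rpow {b : ℕ → ℝ} (h : Tendsto b atTop (nhds 0)) {r : ℝ} (hr : 0 < r) :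
    Tendsto (fun n => b n ^ r) atTop (nhds 0) := by
  have hc : ContinuousAt (fun x : ℝ => x ^ r) 0 :=
    Real.continuousAt_rpow_const 0 r (Or.inr hr.le)
  have := hc.tendsto.comp h
  simpa [Real.zero_rpow hr.ne', Function.comp_def] using this

lemma rpow_tendsto_zero_iff {a : ℕ → ℝ} (ha : ∀ n, 0 ≤ a n) {q : ℝ} (hq : 0 < q) :
    Tendsto (fun n => a n ^ q) atTop (nhds 0) ↔ Tendsto a atTop (nhds 0) := by
  constructor
  · intro h
    have key : (fun n => a n) = fun n => (a n ^ q) ^ q⁻¹ := by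
      funext n; rw [Real.rpow_rpow_inv (ha n) hq.ne']
    rw [show a = fun n => a n from rfl, key]
    exact aux_rpow h (inv_pos.mpr hq)
  · intro h
    exact aux_rpow h hq

lemma tendsto_zero_of_le {F G e : ℕ → ℝ} {K : ℝ} (hF : ∀ n, 0 ≤ F n)
    (hle : ∀ n, F n ≤ K * G n + e n) (hG : Tendsto G atTop (nhds 0))
    (he : Tendsto e atTop (nhds 0)) :
    Tendsto F atTop (nhds 0) := by
  have hlim : Tendsto (fun n => K * G n + e n) atTop (nhds 0) := by
    have := (hG.const_mul K).add he
    simpa using this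
  exact squeeze_zero hF hle hlim

lemma two_rpow_bound {p : ℝ} (hp : 1 ≤ p) {a b : ℝ} (ha : 0 ≤ a) (hb : 0 ≤ b) :
    (a + b) ^ p ≤ 2 ^ p * (a ^ p + b ^ p) := by
  have hp0 : (0:ℝ) ≤ p := by linarith
  have h1 : a + b ≤ 2 * max a b := by
    rcases le_total a b with h | h
    · rw [max_eq_right h]; linarith
    · rw [max_eq_left h]; linarith
  calc (a+b)^p ≤ (2 * max a b)^p := Real.rpow_le_rpow (by positivity) h1 hp0
    _ = 2^p * (max a b)^p := Real.mul_rpow (by norm_num) (le_max_of_le_left ha)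
    _ ≤ 2^p * (a^p + b^p) := by
        have hmb : (max a b)^p ≤ a^p + b^p := by
          rcases le_total a b with h | h
          · rw [max_eq_right h]
            have := Real.rpow_nonneg ha p
            linarith
          · rw [max_eq_left h]
            have := Real.rpow_nonneg hb p
            linarith
        have h2p : (0:ℝ) ≤ 2^p := Real.rpow_nonneg (by norm_num) p
        exact mul_le_mul_of_nonneg_left hmb h2p

lemma triangle_bound {E : Type*} [NormedAddCommGroup E] {p : ℝ} (hp : 1 ≤ p) (x y z : E) :
    ‖x - z‖ ^ p ≤ 2 ^ p * (‖x - y‖ ^ p + ‖y - z‖ ^ p) := by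
  calc ‖x - z‖^p ≤ (‖x - y‖ + ‖y - z‖)^p :=
        Real.rpow_le_rpow (norm_nonneg _) (norm_sub_le_norm_sub_add_norm_sub x y z) (by linarith)
    _ ≤ _ := two_rpow_bound hp (norm_nonneg _) (norm_nonneg _)

lemma tendsto_integral_zero {T : ℝ} (hT : 0 < T) {f : ℕ → ℝ → ℝ}
    (hf0 : ∀ n s, 0 ≤ f n s)
    (hfi : ∀ n, IntervalIntegrable (f n) MeasureTheory.volume 0 T)
    (hsmall : ∀ ε > 0, ∃ N, ∀ n ≥ N, ∀ s ∈ Set.Icc (0:ℝ) T, f n s ≤ ε) :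
    Tendsto (fun n => ∫ s in (0:ℝ)..T, f n s) atTop (nhds 0) := by
  rw [Metric.tendsto_atTop]
  intro ε hε
  obtain ⟨N, hN⟩ := hsmall (ε / (2*T)) (by positivity)
  refine ⟨N, fun n hn => ?_⟩
  have h1 : (∫ s in (0:ℝ)..T, f n s) ≤ ∫ _s in (0:ℝ)..T, (ε/(2*T)) :=
    intervalIntegral.integral_mono_on hT.le (hfi n) intervalIntegrable_const (hN n hn)
  have h2 : (∫ _s in (0:ℝ)..T, (ε/(2*T))) = ε/2 := by
    rw [intervalIntegral.integral_const, smul_eq_mul]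
    field_simp
    ring
  have h3 : 0 ≤ ∫ s in (0:ℝ)..T, f n s :=
    intervalIntegral.integral_nonneg hT.le (fun u _ => hf0 n u)
  rw [Real.dist_eq, sub_zero, abs_of_nonneg h3]
  rw [h2] at h1
  linarith

lemma integral_le_combo {T : ℝ} (hT : 0 ≤ T) {f g e : ℝ → ℝ} {K : ℝ}
    (hgi : IntervalIntegrable g MeasureTheory.volume 0 T)
    (hei : IntervalIntegrable e MeasureTheory.volume 0 T)
    (hfi : IntervalIntegrable f MeasureTheory.volume 0 T)
    (hpt : ∀ s ∈ Set.Icc (0:ℝ) T, f s ≤ K * g s + K * e s) :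
    (∫ s in (0:ℝ)..T, f s) ≤ K * (∫ s in (0:ℝ)..T, g s) + K * (∫ s in (0:ℝ)..T, e s) := by
  have h1 : (∫ s in (0:ℝ)..T, f s) ≤ ∫ s in (0:ℝ)..T, (K * g s + K * e s) := by
    apply intervalIntegral.integral_mono_on hT hfi ?_ hpt
    exact (hgi.const_mul K).add (hei.const_mul K)
  rw [intervalIntegral.integral_add (hgi.const_mul K) (hei.const_mul K),
    intervalIntegral.integral_const_mul, intervalIntegral.integral_const_mul] at h1
  exact h1


lemma cont_integrand {m : ℕ} {T : ℝ} (hT : 0 ≤ T) (ω1 ω2 : PathSp m T) {p : ℝ} (hp0 : 0 ≤ p)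
    {φ ψ : ℝ → ℝ} (hφ : Continuous φ) (hψ : Continuous ψ) :
    Continuous (fun s => ‖evc hT ω1 (φ s) - evc hT ω2 (ψ s)‖ ^ p) := by
  have h := (((evc_continuous hT ω1).comp hφ).sub ((evc_continuous hT ω2).comp hψ)).norm
  exact h.rpow_const (fun s => Or.inr hp0)

lemma err_tendsto {m : ℕ} {T : ℝ} (hT : 0 < T) {p : ℝ} (hp : 1 ≤ p) (ω : PathSp m T)
    {tn : ℕ → ℝ} {t : ℝ} (httn : Tendsto tn atTop (nhds t))
    (φ : ℝ → ℝ → ℝ)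
    (hφc : ∀ τ, Continuous (φ τ))
    (hφl : ∀ τ τ' s, |φ τ s - φ τ' s| ≤ |τ - τ'|) :
    Tendsto (fun n => ∫ s in (0:ℝ)..T, ‖evc hT.le ω (φ (tn n) s) - evc hT.le ω (φ t s)‖ ^ p)
      atTop (nhds 0) := by
  have hp0 : 0 < p := lt_of_lt_of_le one_pos hp
  apply tendsto_integral_zero hT
  · intro n s; exact Real.rpow_nonneg (norm_nonneg _) p
  · intro n
    exact (cont_integrand hT.le ω ω hp0.le (hφc (tn n)) (hφc t)).intervalIntegrable _ _
  · intro ε hε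
    obtain ⟨δ, hδ, H⟩ := evc_ucont hT.le ω (ε ^ p⁻¹) (Real.rpow_pos_of_pos hε _)
    obtain ⟨N, hN⟩ := Metric.tendsto_atTop.mp httn δ hδ
    refine ⟨N, fun n hn s _ => ?_⟩
    have h1 : ‖evc hT.le ω (φ (tn n) s) - evc hT.le ω (φ t s)‖ ≤ ε ^ p⁻¹ := by
      apply H
      calc |φ (tn n) s - φ t s| ≤ |tn n - t| := hφl _ _ s
        _ ≤ δ := by
            have := hN n hn; rw [Real.dist_eq] at this; exact this.le
    calc ‖evc hT.le ω (φ (tn n) s) - evc hT.le ω (φ t s)‖ ^ p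
        ≤ (ε ^ p⁻¹) ^ p := Real.rpow_le_rpow (norm_nonneg _) h1 hp0.le
      _ = ε := Real.rpow_inv_rpow hε.le hp0.ne'

lemma core {m : ℕ} {T : ℝ} (hT : 0 < T) {p : ℝ} (hp : 1 ≤ p)
    (tn : ℕ → ℝ) (htn : ∀ n, tn n ∈ Set.Icc (0:ℝ) T)
    {t : ℝ} (ht : t ∈ Set.Icc (0:ℝ) T)
    (httn : Tendsto tn atTop (nhds t))
    (ωn : ℕ → PathSp m T) (ω : PathSp m T)
    (hC : Tendsto (fun n => ‖evc hT.le (ωn n) (tn n) - evc hT.le ω t‖) atTop (nhds 0)) :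
    Tendsto (fun n => ∫ s in (0:ℝ)..T,
        ‖evc hT.le (ωn n) (min (tn n) s) - evc hT.le ω (min t s)‖ ^ p) atTop (nhds 0)
      ↔ Tendsto (fun n => ∫ s in (0:ℝ)..T,
        ‖evc hT.le (ωn n) (tn n - s) - evc hT.le ω (t - s)‖ ^ p) atTop (nhds 0) := by
  have hp0 : 0 < p := lt_of_lt_of_le one_pos hp
  have hnn : ∀ x : Em m, (0:ℝ) ≤ ‖x‖ ^ p := fun x => Real.rpow_nonneg (norm_nonneg _) p
  have hK : (0:ℝ) ≤ 2 ^ p := Real.rpow_nonneg (by norm_num) p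
  -- integrability helper
  have hii : ∀ (ω1 ω2 : PathSp m T) (φ ψ : ℝ → ℝ), Continuous φ → Continuous ψ →
      ∀ a b : ℝ, IntervalIntegrable
        (fun s => ‖evc hT.le ω1 (φ s) - evc hT.le ω2 (ψ s)‖ ^ p) volume a b :=
    fun ω1 ω2 φ ψ hφ hψ a b =>
      (cont_integrand hT.le ω1 ω2 hp0.le hφ hψ).intervalIntegrable a b
  have hcmin : ∀ c : ℝ, Continuous (fun s : ℝ => min c s) := fun c =>
    continuous_const.min continuous_id
  have hcsub : ∀ c : ℝ, Continuous (fun s : ℝ => c - s) := fun c =>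
    continuous_const.sub continuous_id
  have hcid : Continuous (fun s : ℝ => s) := continuous_id
  -- the sequences
  set L : ℕ → ℝ := fun n =>
    ∫ s in (0:ℝ)..(tn n), ‖evc hT.le (ωn n) s - evc hT.le ω s‖ ^ p with hLdef
  set E' : ℕ → ℝ := fun n => ∫ s in (0:ℝ)..T,
    ‖evc hT.le (ωn n) (min (tn n) s) - evc hT.le ω (min (tn n) s)‖ ^ p with hE'def
  set B' : ℕ → ℝ := fun n => ∫ s in (0:ℝ)..T,
    ‖evc hT.le (ωn n) (tn n - s) - evc hT.le ω (tn n - s)‖ ^ p with hB'def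
  set D : ℕ → ℝ := fun n => ‖evc hT.le (ωn n) (tn n) - evc hT.le ω (tn n)‖ with hDdef
  -- error sequences
  have heE : Tendsto (fun n => ∫ s in (0:ℝ)..T,
      ‖evc hT.le ω (min (tn n) s) - evc hT.le ω (min t s)‖ ^ p) atTop (nhds 0) := by
    apply err_tendsto hT hp ω httn (fun τ s => min τ s) (fun τ => hcmin τ)
    intro τ τ' s
    simpa using abs_min_sub_min_le_max τ s τ' s
  have heB : Tendsto (fun n => ∫ s in (0:ℝ)..T,
      ‖evc hT.le ω (tn n - s) - evc hT.le ω (t - s)‖ ^ p) atTop (nhds 0) := by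
    apply err_tendsto hT hp ω httn (fun τ s => τ - s) (fun τ => hcsub τ)
    intro τ τ' s
    simp [sub_sub_sub_cancel_right]
  -- D tends to zero
  have hD : Tendsto D atTop (nhds 0) := by
    have h1 : Tendsto (fun n => evc hT.le ω (tn n)) atTop (nhds (evc hT.le ω t)) :=
      ((evc_continuous hT.le ω).tendsto t).comp httn
    have h2 : Tendsto (fun n => ‖evc hT.le ω t - evc hT.le ω (tn n)‖) atTop (nhds 0) := by
      have := (tendsto_const_nhds (x := evc hT.le ω t) (f := atTop)).sub h1
      rw [sub_self] at this
      simpa using this.norm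
    apply squeeze_zero (fun n => norm_nonneg _) (fun n => ?_) (by simpa using hC.add h2)
    exact norm_sub_le_norm_sub_add_norm_sub _ _ _
  -- E' = L + rest
  have eq1 : ∀ n, E' n = L n + (T - tn n) * D n ^ p := by
    intro n
    have hsplit := intervalIntegral.integral_add_adjacent_intervals
      (a := 0) (b := tn n) (c := T)
      (hii (ωn n) ω (fun s => min (tn n) s) (fun s => min (tn n) s) (hcmin _) (hcmin _) 0 (tn n))
      (hii (ωn n) ω (fun s => min (tn n) s) (fun s => min (tn n) s) (hcmin _) (hcmin _) (tn n) T)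
    rw [hE'def]
    simp only []
    rw [← hsplit]
    congr 1
    · apply intervalIntegral.integral_congr
      intro s hs
      rw [Set.uIcc_of_le (htn n).1] at hs
      simp only [min_eq_right hs.2]
    · rw [intervalIntegral.integral_congr (g := fun _ => D n ^ p) ?_,
        intervalIntegral.integral_const, smul_eq_mul]
      intro s hs
      rw [Set.uIcc_of_le (htn n).2] at hs
      simp only [min_eq_left hs.1, hDdef]
  -- B' = L
  have eq2 : ∀ n, B' n = L n := by
    intro n
    have hF := hii (ωn n) ω (fun s => s) (fun s => s) hcid hcid
    have h1 : B' n = ∫ u in (tn n - T)..(tn n - 0),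
        ‖evc hT.le (ωn n) u - evc hT.le ω u‖ ^ p :=
      intervalIntegral.integral_comp_sub_left
        (fun u => ‖evc hT.le (ωn n) u - evc hT.le ω u‖ ^ p) (tn n)
    have h2 : (∫ u in (tn n - T)..(0:ℝ),
        ‖evc hT.le (ωn n) u - evc hT.le ω u‖ ^ p) = 0 := by
      rw [intervalIntegral.integral_congr (g := fun _ => (0:ℝ)) ?_]
      · simp
      · intro u hu
        rw [Set.uIcc_of_le (by linarith [(htn n).2] : tn n - T ≤ (0:ℝ))] at hu
        simp only [evc_nonpos hT.le (ωn n) hu.2, evc_nonpos hT.le ω hu.2, sub_self,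
          norm_zero]
        exact Real.zero_rpow hp0.ne'
    have h3 := intervalIntegral.integral_add_adjacent_intervals
      (a := tn n - T) (b := 0) (c := tn n) (hF _ _) (hF _ _)
    rw [h1, sub_zero, ← h3, h2, zero_add]
  -- rest tends to zero
  have hrest : Tendsto (fun n => (T - tn n) * D n ^ p) atTop (nhds 0) := by
    have h1 : Tendsto (fun n => T - tn n) atTop (nhds (T - t)) :=
      tendsto_const_nhds.sub httn
    have := h1.mul (aux_rpow hD hp0)
    simpa using this
  have hrest0 : ∀ n, 0 ≤ (T - tn n) * D n ^ p := fun n =>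
    mul_nonneg (by linarith [(htn n).2]) (Real.rpow_nonneg (norm_nonneg _) p)
  have hL0 : ∀ n, 0 ≤ L n := fun n =>
    intervalIntegral.integral_nonneg (htn n).1 (fun u _ => hnn _)
  have hE'0 : ∀ n, 0 ≤ E' n := fun n =>
    intervalIntegral.integral_nonneg hT.le (fun u _ => hnn _)
  -- E' → 0 ↔ L → 0
  have hE'L : Tendsto E' atTop (nhds 0) ↔ Tendsto L atTop (nhds 0) := by
    have hEL : E' = fun n => L n + (T - tn n) * D n ^ p := funext eq1
    rw [hEL, tendsto_zero_iff_of_add hL0 hrest0]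
    exact ⟨fun h => h.1, fun h => ⟨h, hrest⟩⟩
  have hB'L : Tendsto B' atTop (nhds 0) ↔ Tendsto L atTop (nhds 0) := by
    rw [funext eq2]
  -- main comparison: LHS ↔ E' → 0
  have hmainE : Tendsto (fun n => ∫ s in (0:ℝ)..T,
      ‖evc hT.le (ωn n) (min (tn n) s) - evc hT.le ω (min t s)‖ ^ p) atTop (nhds 0)
      ↔ Tendsto E' atTop (nhds 0) := by
    constructor
    · intro hA
      apply tendsto_zero_of_le (K := 2 ^ p) hE'0 ?_ hA (by simpa using heE.const_mul (2 ^ p))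
      intro n
      apply integral_le_combo hT.le
        (hii (ωn n) ω _ _ (hcmin (tn n)) (hcmin t) 0 T)
        (hii ω ω _ _ (hcmin (tn n)) (hcmin t) 0 T)
        (hii (ωn n) ω _ _ (hcmin (tn n)) (hcmin (tn n)) 0 T)
      intro s _
      have htr := triangle_bound (E := Em m) hp
        (evc hT.le (ωn n) (min (tn n) s)) (evc hT.le ω (min t s)) (evc hT.le ω (min (tn n) s))
      rw [norm_sub_rev (evc hT.le ω (min t s))] at htr
      rw [mul_add] at htr
      linarith [htr]
    · intro hE'
      apply tendsto_zero_of_le (K := 2 ^ p)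
        (fun n => intervalIntegral.integral_nonneg hT.le (fun u _ => hnn _)) ?_ hE'
        (by simpa using heE.const_mul (2 ^ p))
      intro n
      apply integral_le_combo hT.le
        (hii (ωn n) ω _ _ (hcmin (tn n)) (hcmin (tn n)) 0 T)
        (hii ω ω _ _ (hcmin (tn n)) (hcmin t) 0 T)
        (hii (ωn n) ω _ _ (hcmin (tn n)) (hcmin t) 0 T)
      intro s _
      have htr := triangle_bound (E := Em m) hp
        (evc hT.le (ωn n) (min (tn n) s)) (evc hT.le ω (min (tn n) s)) (evc hT.le ω (min t s))
      rw [mul_add] at htr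
      linarith [htr]
  have hmainB : Tendsto (fun n => ∫ s in (0:ℝ)..T,
      ‖evc hT.le (ωn n) (tn n - s) - evc hT.le ω (t - s)‖ ^ p) atTop (nhds 0)
      ↔ Tendsto B' atTop (nhds 0) := by
    constructor
    · intro hA
      apply tendsto_zero_of_le (K := 2 ^ p)
        (fun n => intervalIntegral.integral_nonneg hT.le (fun u _ => hnn _)) ?_ hA
        (by simpa using heB.const_mul (2 ^ p))
      intro n
      apply integral_le_combo hT.le
        (hii (ωn n) ω _ _ (hcsub (tn n)) (hcsub t) 0 T)
        (hii ω ω _ _ (hcsub (tn n)) (hcsub t) 0 T)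
        (hii (ωn n) ω _ _ (hcsub (tn n)) (hcsub (tn n)) 0 T)
      intro s _
      have htr := triangle_bound (E := Em m) hp
        (evc hT.le (ωn n) (tn n - s)) (evc hT.le ω (t - s)) (evc hT.le ω (tn n - s))
      rw [norm_sub_rev (evc hT.le ω (t - s))] at htr
      rw [mul_add] at htr
      linarith [htr]
    · intro hB'
      apply tendsto_zero_of_le (K := 2 ^ p)
        (fun n => intervalIntegral.integral_nonneg hT.le (fun u _ => hnn _)) ?_ hB'
        (by simpa using heB.const_mul (2 ^ p))
      intro n
      apply integral_le_combo hT.le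
        (hii (ωn n) ω _ _ (hcsub (tn n)) (hcsub (tn n)) 0 T)
        (hii ω ω _ _ (hcsub (tn n)) (hcsub t) 0 T)
        (hii (ωn n) ω _ _ (hcsub (tn n)) (hcsub t) 0 T)
      intro s _
      have htr := triangle_bound (E := Em m) hp
        (evc hT.le (ωn n) (tn n - s)) (evc hT.le ω (tn n - s)) (evc hT.le ω (t - s))
      rw [mul_add] at htr
      linarith [htr]
  rw [hmainE, hmainB, hE'L, hB'L]

end Stmt3Aux

open Stmt3Aux

/-- for `1 ≤ p < ∞`, `d_p((t_n,ω_n),(t,ω)) → 0` iff `←d_p((t_n,ω_n),(t,ω)) → 0`;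
i.e., the pseudometrics `d_p` and `←d_p` induce the same topology on `Θ`. -/
theorem stmt3 (m : ℕ) (hm : 1 ≤ m) (T : ℝ) (hT : 0 < T) (p : ℝ) (hp : 1 ≤ p) :
    ∀ (θn : ℕ → ThetaSp m T) (θ : ThetaSp m T),
      Tendsto (fun n => dPmetric p (θn n) θ) atTop (nhds 0) ↔
      Tendsto (fun n => dLp p (θn n) θ) atTop (nhds 0) := by
  intro θn θ
  have hp0 : 0 < p := lt_of_lt_of_le one_pos hp
  have hnn : ∀ x : Em m, (0:ℝ) ≤ ‖x‖ ^ p := fun x => Real.rpow_nonneg (norm_nonneg _) p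
  have hii : ∀ (ω1 ω2 : PathSp m T) (φ ψ : ℝ → ℝ), Continuous φ → Continuous ψ →
      ∀ a b : ℝ, IntervalIntegrable
        (fun s => ‖evc hT.le ω1 (φ s) - evc hT.le ω2 (ψ s)‖ ^ p) volume a b :=
    fun ω1 ω2 φ ψ hφ hψ a b =>
      (cont_integrand hT.le ω1 ω2 hp0.le hφ hψ).intervalIntegrable a b
  have hcmin : ∀ c : ℝ, Continuous (fun s : ℝ => min c s) := fun c =>
    continuous_const.min continuous_id
  have hcsub : ∀ c : ℝ, Continuous (fun s : ℝ => c - s) := fun c =>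
    continuous_const.sub continuous_id
  -- rewrite dPmetric in terms of evc
  have hP : (fun n => dPmetric p (θn n) θ) = fun n =>
      |((θn n).1:ℝ) - ((θ.1:ℝ))| +
      (∫ s in (0:ℝ)..(T+1),
        ‖evc hT.le (θn n).2 (min ((θn n).1:ℝ) s) - evc hT.le θ.2 (min (θ.1:ℝ) s)‖ ^ p)
        ^ (1/p) := by
    funext n
    unfold dPmetric
    have h1 : ∀ s:ℝ, ev (θn n).2 (min ((θn n).1:ℝ) s)
        = evc hT.le (θn n).2 (min ((θn n).1:ℝ) s) :=
      fun s => ev_eq_evc hT.le _ (min_le_of_left_le (θn n).1.2.2)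
    have h2 : ∀ s:ℝ, ev θ.2 (min ((θ.1):ℝ) s) = evc hT.le θ.2 (min ((θ.1):ℝ) s) :=
      fun s => ev_eq_evc hT.le _ (min_le_of_left_le θ.1.2.2)
    simp only [h1, h2]
  -- rewrite dLp in terms of evc
  have hLeq : (fun n => dLp p (θn n) θ) = fun n =>
      (|((θn n).1:ℝ) - ((θ.1:ℝ))| +
        ‖evc hT.le (θn n).2 ((θn n).1:ℝ) - evc hT.le θ.2 (θ.1:ℝ)‖) +
      (∫ s in (0:ℝ)..T,
        ‖evc hT.le (θn n).2 (((θn n).1:ℝ) - s) - evc hT.le θ.2 ((θ.1:ℝ) - s)‖ ^ p)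
        ^ (1/p) := by
    funext n
    unfold dLp
    rw [ev_eq_evc hT.le (θn n).2 (θn n).1.2.2, ev_eq_evc hT.le θ.2 θ.1.2.2]
    congr 2
    apply intervalIntegral.integral_congr
    intro s hs
    rw [Set.uIcc_of_le hT.le] at hs
    have ha : ((θn n).1:ℝ) - s ≤ T := by linarith [(θn n).1.2.2, hs.1]
    have hb : ((θ.1):ℝ) - s ≤ T := by linarith [θ.1.2.2, hs.1]
    simp only [ev_eq_evc hT.le (θn n).2 ha, ev_eq_evc hT.le θ.2 hb]
  -- nonnegativity of the pieces
  have hA0 : ∀ n, 0 ≤ ∫ s in (0:ℝ)..(T+1),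
      ‖evc hT.le (θn n).2 (min ((θn n).1:ℝ) s) - evc hT.le θ.2 (min (θ.1:ℝ) s)‖ ^ p :=
    fun n => intervalIntegral.integral_nonneg (by linarith) (fun u _ => hnn _)
  have hE0 : ∀ n, 0 ≤ ∫ s in (0:ℝ)..T,
      ‖evc hT.le (θn n).2 (min ((θn n).1:ℝ) s) - evc hT.le θ.2 (min (θ.1:ℝ) s)‖ ^ p :=
    fun n => intervalIntegral.integral_nonneg hT.le (fun u _ => hnn _)
  have hB0 : ∀ n, 0 ≤ ∫ s in (0:ℝ)..T,
      ‖evc hT.le (θn n).2 (((θn n).1:ℝ) - s) - evc hT.le θ.2 ((θ.1:ℝ) - s)‖ ^ p :=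
    fun n => intervalIntegral.integral_nonneg hT.le (fun u _ => hnn _)
  -- splitting of the dPmetric integral at T
  have hAsplit : ∀ n, (∫ s in (0:ℝ)..(T+1),
      ‖evc hT.le (θn n).2 (min ((θn n).1:ℝ) s) - evc hT.le θ.2 (min (θ.1:ℝ) s)‖ ^ p)
      = (∫ s in (0:ℝ)..T,
          ‖evc hT.le (θn n).2 (min ((θn n).1:ℝ) s) - evc hT.le θ.2 (min (θ.1:ℝ) s)‖ ^ p)
        + ‖evc hT.le (θn n).2 ((θn n).1:ℝ) - evc hT.le θ.2 (θ.1:ℝ)‖ ^ p := by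
    intro n
    have hadj := intervalIntegral.integral_add_adjacent_intervals (a := 0) (b := T) (c := T+1)
      (hii (θn n).2 θ.2 (fun s => min ((θn n).1:ℝ) s) (fun s => min ((θ.1:ℝ)) s)
        (hcmin _) (hcmin _) 0 T)
      (hii (θn n).2 θ.2 (fun s => min ((θn n).1:ℝ) s) (fun s => min ((θ.1:ℝ)) s)
        (hcmin _) (hcmin _) T (T+1))
    rw [← hadj]
    congr 1
    rw [intervalIntegral.integral_congr
        (g := fun _ => ‖evc hT.le (θn n).2 ((θn n).1:ℝ) - evc hT.le θ.2 (θ.1:ℝ)‖ ^ p) ?_,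
      intervalIntegral.integral_const, smul_eq_mul]
    · ring_nf
    · intro s hs
      rw [Set.uIcc_of_le (by linarith : T ≤ T+1)] at hs
      simp only [min_eq_left ((θn n).1.2.2.trans hs.1), min_eq_left (θ.1.2.2.trans hs.1)]
  -- characterization of |t_n - t| → 0
  have hdist : Tendsto (fun n => ((θn n).1:ℝ)) atTop (nhds (θ.1:ℝ))
      ↔ Tendsto (fun n => |((θn n).1:ℝ) - ((θ.1:ℝ))|) atTop (nhds 0) := by
    rw [tendsto_iff_dist_tendsto_zero]
    simp only [Real.dist_eq]
  -- characterize LHS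
  have hLHS : Tendsto (fun n => dPmetric p (θn n) θ) atTop (nhds 0) ↔
      (Tendsto (fun n => ((θn n).1:ℝ)) atTop (nhds (θ.1:ℝ)) ∧
       Tendsto (fun n =>
         ‖evc hT.le (θn n).2 ((θn n).1:ℝ) - evc hT.le θ.2 (θ.1:ℝ)‖) atTop (nhds 0) ∧
       Tendsto (fun n => ∫ s in (0:ℝ)..T,
         ‖evc hT.le (θn n).2 (min ((θn n).1:ℝ) s) - evc hT.le θ.2 (min (θ.1:ℝ) s)‖ ^ p)
         atTop (nhds 0)) := by
    rw [hP, tendsto_zero_iff_of_add (fun n => abs_nonneg _)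
        (fun n => Real.rpow_nonneg (hA0 n) _),
      rpow_tendsto_zero_iff hA0 (by positivity : (0:ℝ) < 1/p), hdist]
    rw [show (fun n => ∫ s in (0:ℝ)..(T+1),
        ‖evc hT.le (θn n).2 (min ((θn n).1:ℝ) s) - evc hT.le θ.2 (min (θ.1:ℝ) s)‖ ^ p)
        = fun n => (∫ s in (0:ℝ)..T,
          ‖evc hT.le (θn n).2 (min ((θn n).1:ℝ) s) - evc hT.le θ.2 (min (θ.1:ℝ) s)‖ ^ p)
          + ‖evc hT.le (θn n).2 ((θn n).1:ℝ) - evc hT.le θ.2 (θ.1:ℝ)‖ ^ p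
        from funext hAsplit,
      tendsto_zero_iff_of_add hE0 (fun n => hnn _),
      rpow_tendsto_zero_iff (fun n => norm_nonneg _) hp0]
    tauto
  -- characterize RHS
  have hRHS : Tendsto (fun n => dLp p (θn n) θ) atTop (nhds 0) ↔
      (Tendsto (fun n => ((θn n).1:ℝ)) atTop (nhds (θ.1:ℝ)) ∧
       Tendsto (fun n =>
         ‖evc hT.le (θn n).2 ((θn n).1:ℝ) - evc hT.le θ.2 (θ.1:ℝ)‖) atTop (nhds 0) ∧
       Tendsto (fun n => ∫ s in (0:ℝ)..T,
         ‖evc hT.le (θn n).2 (((θn n).1:ℝ) - s) - evc hT.le θ.2 ((θ.1:ℝ) - s)‖ ^ p)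
         atTop (nhds 0)) := by
    rw [hLeq, tendsto_zero_iff_of_add
        (fun n => add_nonneg (abs_nonneg _) (norm_nonneg _))
        (fun n => Real.rpow_nonneg (hB0 n) _),
      tendsto_zero_iff_of_add (fun n => abs_nonneg _) (fun n => norm_nonneg _),
      rpow_tendsto_zero_iff hB0 (by positivity : (0:ℝ) < 1/p), hdist]
    tauto
  rw [hLHS, hRHS]
  constructor
  · rintro ⟨h1, h2, h3⟩
    exact ⟨h1, h2, (core hT hp (fun n => ((θn n).1:ℝ)) (fun n => (θn n).1.2) θ.1.2 h1
      (fun n => (θn n).2) θ.2 h2).mp h3⟩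
  · rintro ⟨h1, h2, h3⟩
    exact ⟨h1, h2, (core hT hp (fun n => ((θn n).1:ℝ)) (fun n => (θn n).1.2) θ.1.2 h1
      (fun n => (θn n).2) θ.2 h2).mpr h3⟩
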